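/- For the Kahan discretisation of a Hamiltonian system ẋ = J∇H(x) with cubic Hamiltonian H : ℝᴺ → ℝ (degree-3 polynomial) and constant skew-symmetric matrix J, the function H̃(x,h) = H(x) + (h/3)·∇H(x)ᵀ(I − (h/2)f'(x))⁻¹f(x), where f(x) = J∇H(x), is invariant under the Kahan map Φ(x,h) = x + h(I − (h/2)f'(x))⁻¹f(x) in the case N = 2: H̃(Φ(x,h),h) = H̃(x,h) wherever all expressions are defined. -/

import Mathlib

open Matrix MvPolynomial Finsupp

noncomputable def co (H : MvPolynomial (Fin 2) ℝ) (i j : ℕ) : ℝ :=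
  coeff (Finsupp.single 0 i + Finsupp.single 1 j) H

lemma sum_deg (i j : ℕ) :
    ((Finsupp.single 0 i + Finsupp.single 1 j : Fin 2 →₀ ℕ).sum fun _ e => e) = i + j := by
  rw [Finsupp.sum_fintype]
  · simp [Fin.sum_univ_two, Finsupp.single_apply]
  · intro; rfl

lemma co_zero (H : MvPolynomial (Fin 2) ℝ) (hdeg : H.totalDegree ≤ 3) (i j : ℕ)
    (hij : 3 < i + j) : co H i j = 0 := by
  apply coeff_eq_zero_of_totalDegree_lt
  have := sum_deg i j
  rw [Finsupp.sum] at this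
  rw [this]; omega

lemma cubic_rep (H : MvPolynomial (Fin 2) ℝ) (hdeg : H.totalDegree ≤ 3) :
    H = C (co H 0 0) + C (co H 1 0) * X 0 + C (co H 0 1) * X 1
      + C (co H 2 0) * X 0 ^ 2 + C (co H 1 1) * X 0 * X 1 + C (co H 0 2) * X 1 ^ 2
      + C (co H 3 0) * X 0 ^ 3 + C (co H 2 1) * X 0 ^ 2 * X 1
      + C (co H 1 2) * X 0 * X 1 ^ 2 + C (co H 0 3) * X 1 ^ 3 := by
  have hsub : H.support ⊆ (Finset.range 4 ×ˢ Finset.range 4).image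
      (fun p => Finsupp.single 0 p.1 + Finsupp.single 1 p.2) := by
    intro d hd
    have h1 := MvPolynomial.le_totalDegree hd
    have h2 : (d.sum fun _ e => e) = d 0 + d 1 := by
      rw [Finsupp.sum_fintype]
      · simp [Fin.sum_univ_two]
      · intro; rfl
    have hde : d = Finsupp.single 0 (d 0) + Finsupp.single 1 (d 1) := by
      ext i; fin_cases i <;> simp [Finsupp.single_apply]
    refine Finset.mem_image.mpr ⟨(d 0, d 1), ?_, hde.symm⟩
    simp only [Finset.mem_product, Finset.mem_range]
    omega
  have hinj : ∀ p ∈ Finset.range 4 ×ˢ Finset.range 4,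
      ∀ q ∈ Finset.range 4 ×ˢ Finset.range 4,
      (fun p : ℕ × ℕ => Finsupp.single (0 : Fin 2) p.1 + Finsupp.single 1 p.2) p
      = (fun p : ℕ × ℕ => Finsupp.single (0 : Fin 2) p.1 + Finsupp.single 1 p.2) q → p = q := by
    intro p _ q _ hpq
    simp only at hpq
    have h0 : (Finsupp.single 0 p.1 + Finsupp.single 1 p.2 : Fin 2 →₀ ℕ) 0
        = (Finsupp.single 0 q.1 + Finsupp.single 1 q.2 : Fin 2 →₀ ℕ) 0 := by rw [hpq]
    have h1 : (Finsupp.single 0 p.1 + Finsupp.single 1 p.2 : Fin 2 →₀ ℕ) 1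
        = (Finsupp.single 0 q.1 + Finsupp.single 1 q.2 : Fin 2 →₀ ℕ) 1 := by rw [hpq]
    simp [Finsupp.single_apply] at h0 h1
    exact Prod.ext h0 h1
  have hrep : H = ∑ p ∈ Finset.range 4 ×ˢ Finset.range 4,
      monomial (Finsupp.single 0 p.1 + Finsupp.single 1 p.2) (co H p.1 p.2) := by
    conv_lhs => rw [← MvPolynomial.support_sum_monomial_coeff H]
    rw [Finset.sum_subset hsub (fun d _ hd => by
      rw [MvPolynomial.notMem_support_iff.mp hd, monomial_zero])]
    rw [Finset.sum_image hinj]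
    rfl
  conv_lhs => rw [hrep]
  rw [Finset.sum_product]
  simp only [Finset.sum_range_succ, Finset.sum_range_zero]
  rw [co_zero H hdeg 1 3 (by norm_num), co_zero H hdeg 2 2 (by norm_num),
    co_zero H hdeg 2 3 (by norm_num), co_zero H hdeg 3 1 (by norm_num),
    co_zero H hdeg 3 2 (by norm_num), co_zero H hdeg 3 3 (by norm_num)]
  simp only [monomial_zero, add_zero, zero_add, Finsupp.single_zero,
    MvPolynomial.monomial_add_single, ← MvPolynomial.C_mul_X_pow_eq_monomial,
    MvPolynomial.monomial_zero', pow_zero, pow_one, mul_one]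
  ring


theorem stmt18 (h : ℝ)
    (J : Matrix (Fin 2) (Fin 2) ℝ) (hJ : Jᵀ = -J)
    (H : MvPolynomial (Fin 2) ℝ) (hdeg : H.totalDegree ≤ 3)
    (grad : (Fin 2 → ℝ) → (Fin 2 → ℝ))
    (hgrad : ∀ x i, grad x i = eval x (pderiv i H))
    (f : (Fin 2 → ℝ) → (Fin 2 → ℝ)) (hf : ∀ x, f x = J *ᵥ grad x)
    (Jac : (Fin 2 → ℝ) → Matrix (Fin 2) (Fin 2) ℝ)
    (hJac : ∀ x i j, Jac x i j = ∑ k, J i k * eval x (pderiv j (pderiv k H)))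
    (M : (Fin 2 → ℝ) → Matrix (Fin 2) (Fin 2) ℝ)
    (hM : ∀ x, M x = 1 - (h/2) • Jac x)
    (Φ : (Fin 2 → ℝ) → (Fin 2 → ℝ))
    (hΦ : ∀ x, Φ x = x + h • ((M x)⁻¹ *ᵥ f x))
    (Htilde : (Fin 2 → ℝ) → ℝ)
    (hHtilde : ∀ x, Htilde x = eval x H + (h/3) * ∑ i, grad x i * ((M x)⁻¹ *ᵥ f x) i)
    (x : Fin 2 → ℝ)
    (hinv : IsUnit (M x)) (hinv' : IsUnit (M (Φ x))) :
    Htilde (Φ x) = Htilde x := by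
  -- J entries
  have hJ00 : J 0 0 = 0 := by
    have := congrFun (congrFun hJ 0) 0
    simp [Matrix.transpose_apply, Matrix.neg_apply] at this
    linarith
  have hJ11 : J 1 1 = 0 := by
    have := congrFun (congrFun hJ 1) 1
    simp [Matrix.transpose_apply, Matrix.neg_apply] at this
    linarith
  have hJ10 : J 1 0 = -(J 0 1) := by
    have := congrFun (congrFun hJ 0) 1
    simp [Matrix.transpose_apply, Matrix.neg_apply] at this
    linarith
  set a := J 0 1 with ha
  -- coefficient representation and eval formulas
  have hrep := cubic_rep H hdeg
  have heval : ∀ y : Fin 2 → ℝ, eval y H = co H 0 0 + co H 1 0*(y 0) + co H 0 1*(y 1)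
      + co H 2 0*(y 0)^2 + co H 1 1*(y 0)*(y 1) + co H 0 2*(y 1)^2 + co H 3 0*(y 0)^3
      + co H 2 1*(y 0)^2*(y 1) + co H 1 2*(y 0)*(y 1)^2 + co H 0 3*(y 1)^3 := by
    intro y; conv_lhs => rw [hrep]
    simp only [eval_add, eval_mul, eval_pow, eval_C, eval_X]
    try ring
  have hg0 : ∀ y : Fin 2 → ℝ, eval y (pderiv 0 H)
      = co H 1 0 + 2*co H 2 0*(y 0) + co H 1 1*(y 1) + 3*co H 3 0*(y 0)^2
        + 2*co H 2 1*(y 0)*(y 1) + co H 1 2*(y 1)^2 := by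
    intro y; conv_lhs => rw [hrep]
    simp [show (2:MvPolynomial (Fin 2) ℝ) = C 2 from by norm_cast,
      show (3:MvPolynomial (Fin 2) ℝ) = C 3 from by norm_cast, pderiv_mul, pderiv_pow,
      pderiv_C, pderiv_X_self, pderiv_X_of_ne, (by decide : (0:Fin 2) ≠ 1),
      (by decide : (1:Fin 2) ≠ 0)]
    ring
  have hg1 : ∀ y : Fin 2 → ℝ, eval y (pderiv 1 H)
      = co H 0 1 + co H 1 1*(y 0) + 2*co H 0 2*(y 1) + co H 2 1*(y 0)^2
        + 2*co H 1 2*(y 0)*(y 1) + 3*co H 0 3*(y 1)^2 := by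
    intro y; conv_lhs => rw [hrep]
    simp [show (2:MvPolynomial (Fin 2) ℝ) = C 2 from by norm_cast,
      show (3:MvPolynomial (Fin 2) ℝ) = C 3 from by norm_cast, pderiv_mul, pderiv_pow,
      pderiv_C, pderiv_X_self, pderiv_X_of_ne, (by decide : (0:Fin 2) ≠ 1),
      (by decide : (1:Fin 2) ≠ 0)]
    ring
  have hS00 : ∀ y : Fin 2 → ℝ, eval y (pderiv 0 (pderiv 0 H))
      = 2*co H 2 0 + 6*co H 3 0*(y 0) + 2*co H 2 1*(y 1) := by
    intro y; conv_lhs => rw [hrep]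
    simp [show (2:MvPolynomial (Fin 2) ℝ) = C 2 from by norm_cast,
      show (3:MvPolynomial (Fin 2) ℝ) = C 3 from by norm_cast, pderiv_mul, pderiv_pow,
      pderiv_C, pderiv_X_self, pderiv_X_of_ne, (by decide : (0:Fin 2) ≠ 1),
      (by decide : (1:Fin 2) ≠ 0)]
    ring
  have hS01 : ∀ y : Fin 2 → ℝ, eval y (pderiv 1 (pderiv 0 H))
      = co H 1 1 + 2*co H 2 1*(y 0) + 2*co H 1 2*(y 1) := by
    intro y; conv_lhs => rw [hrep]
    simp [show (2:MvPolynomial (Fin 2) ℝ) = C 2 from by norm_cast,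
      show (3:MvPolynomial (Fin 2) ℝ) = C 3 from by norm_cast, pderiv_mul, pderiv_pow,
      pderiv_C, pderiv_X_self, pderiv_X_of_ne, (by decide : (0:Fin 2) ≠ 1),
      (by decide : (1:Fin 2) ≠ 0)]
    ring
  have hS10 : ∀ y : Fin 2 → ℝ, eval y (pderiv 0 (pderiv 1 H))
      = co H 1 1 + 2*co H 2 1*(y 0) + 2*co H 1 2*(y 1) := by
    intro y; conv_lhs => rw [hrep]
    simp [show (2:MvPolynomial (Fin 2) ℝ) = C 2 from by norm_cast,
      show (3:MvPolynomial (Fin 2) ℝ) = C 3 from by norm_cast, pderiv_mul, pderiv_pow,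
      pderiv_C, pderiv_X_self, pderiv_X_of_ne, (by decide : (0:Fin 2) ≠ 1),
      (by decide : (1:Fin 2) ≠ 0)]
    ring
  have hS11 : ∀ y : Fin 2 → ℝ, eval y (pderiv 1 (pderiv 1 H))
      = 2*co H 0 2 + 2*co H 1 2*(y 0) + 6*co H 0 3*(y 1) := by
    intro y; conv_lhs => rw [hrep]
    simp [show (2:MvPolynomial (Fin 2) ℝ) = C 2 from by norm_cast,
      show (3:MvPolynomial (Fin 2) ℝ) = C 3 from by norm_cast, pderiv_mul, pderiv_pow,
      pderiv_C, pderiv_X_self, pderiv_X_of_ne, (by decide : (0:Fin 2) ≠ 1),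
      (by decide : (1:Fin 2) ≠ 0)]
    ring
  -- main rewriting
  rw [hHtilde (Φ x), hHtilde x]
  simp only [Fin.sum_univ_two]
  set w := (M x)⁻¹ *ᵥ f x with hwdef
  set v := (M (Φ x))⁻¹ *ᵥ f (Φ x) with hvdef
  have hy0 : Φ x 0 = x 0 + h * w 0 := by
    rw [hΦ x, ← hwdef]; simp
  have hy1 : Φ x 1 = x 1 + h * w 1 := by
    rw [hΦ x, ← hwdef]; simp
  have hE : M x *ᵥ w = f x := by
    rw [hwdef, Matrix.mulVec_mulVec,
      Matrix.mul_nonsing_inv _ ((Matrix.isUnit_iff_isUnit_det _).mp hinv), Matrix.one_mulVec]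
  have hP : M (Φ x) *ᵥ v = f (Φ x) := by
    rw [hvdef, Matrix.mulVec_mulVec,
      Matrix.mul_nonsing_inv _ ((Matrix.isUnit_iff_isUnit_det _).mp hinv'), Matrix.one_mulVec]
  have hE0 : w 0 - h/2*((a*(co H 1 1 + 2*co H 2 1*x 0 + 2*co H 1 2*x 1)) * w 0 + (a*(2*co H 0 2 + 2*co H 1 2*x 0 + 6*co H 0 3*x 1)) * w 1) = a * (co H 0 1 + co H 1 1*x 0 + 2*co H 0 2*x 1 + co H 2 1*x 0^2 + 2*co H 1 2*x 0*x 1 + 3*co H 0 3*x 1^2) := by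
    have := congrFun hE 0
    simp only [Matrix.mulVec, dotProduct, Fin.sum_univ_two, hM, hJac, hf, hgrad,
      hg0, hg1, hS00, hS01, hS10, hS11, hJ00, hJ11, hJ10, ← ha, Matrix.sub_apply,
      Matrix.smul_apply, Matrix.one_apply, smul_eq_mul, Pi.add_apply, Pi.smul_apply,
      eq_false (by decide : ¬(0:Fin 2) = 1), eq_false (by decide : ¬(1:Fin 2) = 0),
      if_true, if_false] at this
    linear_combination this
  have hE1 : w 1 - h/2*((-(a*(2*co H 2 0 + 6*co H 3 0*x 0 + 2*co H 2 1*x 1))) * w 0 + (-(a*(co H 1 1 + 2*co H 2 1*x 0 + 2*co H 1 2*x 1))) * w 1) = -(a * (co H 1 0 + 2*co H 2 0*x 0 + co H 1 1*x 1 + 3*co H 3 0*x 0^2 + 2*co H 2 1*x 0*x 1 + co H 1 2*x 1^2)) := by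
    have := congrFun hE 1
    simp only [Matrix.mulVec, dotProduct, Fin.sum_univ_two, hM, hJac, hf, hgrad,
      hg0, hg1, hS00, hS01, hS10, hS11, hJ00, hJ11, hJ10, ← ha, Matrix.sub_apply,
      Matrix.smul_apply, Matrix.one_apply, smul_eq_mul, Pi.add_apply, Pi.smul_apply,
      eq_false (by decide : ¬(0:Fin 2) = 1), eq_false (by decide : ¬(1:Fin 2) = 0),
      if_true, if_false] at this
    linear_combination this
  have hP0 : v 0 - h/2*((a*(co H 1 1 + 2*co H 2 1*(x 0 + h * w 0) + 2*co H 1 2*(x 1 + h * w 1))) * v 0 + (a*(2*co H 0 2 + 2*co H 1 2*(x 0 + h * w 0) + 6*co H 0 3*(x 1 + h * w 1))) * v 1) = a * (co H 0 1 + co H 1 1*(x 0 + h * w 0) + 2*co H 0 2*(x 1 + h * w 1) + co H 2 1*(x 0 + h * w 0)^2 + 2*co H 1 2*(x 0 + h * w 0)*(x 1 + h * w 1) + 3*co H 0 3*(x 1 + h * w 1)^2) := by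
    have := congrFun hP 0
    simp only [Matrix.mulVec, dotProduct, Fin.sum_univ_two, hM, hJac, hf, hgrad,
      hg0, hg1, hS00, hS01, hS10, hS11, hJ00, hJ11, hJ10, ← ha, Matrix.sub_apply,
      Matrix.smul_apply, Matrix.one_apply, smul_eq_mul, Pi.add_apply, Pi.smul_apply,
      eq_false (by decide : ¬(0:Fin 2) = 1), eq_false (by decide : ¬(1:Fin 2) = 0),
      if_true, if_false, hy0, hy1] at this
    linear_combination this
  have hP1 : v 1 - h/2*((-(a*(2*co H 2 0 + 6*co H 3 0*(x 0 + h * w 0) + 2*co H 2 1*(x 1 + h * w 1)))) * v 0 + (-(a*(co H 1 1 + 2*co H 2 1*(x 0 + h * w 0) + 2*co H 1 2*(x 1 + h * w 1)))) * v 1) = -(a * (co H 1 0 + 2*co H 2 0*(x 0 + h * w 0) + co H 1 1*(x 1 + h * w 1) + 3*co H 3 0*(x 0 + h * w 0)^2 + 2*co H 2 1*(x 0 + h * w 0)*(x 1 + h * w 1) + co H 1 2*(x 1 + h * w 1)^2)) := by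
    have := congrFun hP 1
    simp only [Matrix.mulVec, dotProduct, Fin.sum_univ_two, hM, hJac, hf, hgrad,
      hg0, hg1, hS00, hS01, hS10, hS11, hJ00, hJ11, hJ10, ← ha, Matrix.sub_apply,
      Matrix.smul_apply, Matrix.one_apply, smul_eq_mul, Pi.add_apply, Pi.smul_apply,
      eq_false (by decide : ¬(0:Fin 2) = 1), eq_false (by decide : ¬(1:Fin 2) = 0),
      if_true, if_false, hy0, hy1] at this
    linear_combination this
  have hR0 : (h*w 0) + h/2*((a*(co H 1 1 + 2*co H 2 1*(x 0 + h * w 0) + 2*co H 1 2*(x 1 + h * w 1))) * (h*w 0) + (a*(2*co H 0 2 + 2*co H 1 2*(x 0 + h * w 0) + 6*co H 0 3*(x 1 + h * w 1))) * (h*w 1)) = h * (a * (co H 0 1 + co H 1 1*(x 0 + h * w 0) + 2*co H 0 2*(x 1 + h * w 1) + co H 2 1*(x 0 + h * w 0)^2 + 2*co H 1 2*(x 0 + h * w 0)*(x 1 + h * w 1) + 3*co H 0 3*(x 1 + h * w 1)^2)) := by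
    linear_combination h * hE0
  have hR1 : (h*w 1) + h/2*((-(a*(2*co H 2 0 + 6*co H 3 0*(x 0 + h * w 0) + 2*co H 2 1*(x 1 + h * w 1)))) * (h*w 0) + (-(a*(co H 1 1 + 2*co H 2 1*(x 0 + h * w 0) + 2*co H 1 2*(x 1 + h * w 1)))) * (h*w 1)) = h * (-(a * (co H 1 0 + 2*co H 2 0*(x 0 + h * w 0) + co H 1 1*(x 1 + h * w 1) + 3*co H 3 0*(x 0 + h * w 0)^2 + 2*co H 2 1*(x 0 + h * w 0)*(x 1 + h * w 1) + co H 1 2*(x 1 + h * w 1)^2))) := by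
    linear_combination h * hE1
  have hdet : (M (Φ x)).det = ((1 - h/2*(a*(co H 1 1 + 2*co H 2 1*(x 0 + h * w 0) + 2*co H 1 2*(x 1 + h * w 1)))) * (1 - h/2*(-(a*(co H 1 1 + 2*co H 2 1*(x 0 + h * w 0) + 2*co H 1 2*(x 1 + h * w 1))))) - (h/2*(a*(2*co H 0 2 + 2*co H 1 2*(x 0 + h * w 0) + 6*co H 0 3*(x 1 + h * w 1)))) * (h/2*(-(a*(2*co H 2 0 + 6*co H 3 0*(x 0 + h * w 0) + 2*co H 2 1*(x 1 + h * w 1)))))) := by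
    rw [Matrix.det_fin_two]
    simp only [hM, hJac, Fin.sum_univ_two, hS00, hS01, hS10, hS11, hJ00, hJ11, hJ10, ← ha,
      Matrix.sub_apply, Matrix.smul_apply, Matrix.one_apply, smul_eq_mul,
      eq_false (by decide : ¬(0:Fin 2) = 1), eq_false (by decide : ¬(1:Fin 2) = 0),
      if_true, if_false, hy0, hy1]
    ring
  have hdetne : ((1 - h/2*(a*(co H 1 1 + 2*co H 2 1*(x 0 + h * w 0) + 2*co H 1 2*(x 1 + h * w 1)))) * (1 - h/2*(-(a*(co H 1 1 + 2*co H 2 1*(x 0 + h * w 0) + 2*co H 1 2*(x 1 + h * w 1))))) - (h/2*(a*(2*co H 0 2 + 2*co H 1 2*(x 0 + h * w 0) + 6*co H 0 3*(x 1 + h * w 1)))) * (h/2*(-(a*(2*co H 2 0 + 6*co H 3 0*(x 0 + h * w 0) + 2*co H 2 1*(x 1 + h * w 1)))))) ≠ 0 := by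
    rw [← hdet]
    exact IsUnit.ne_zero ((Matrix.isUnit_iff_isUnit_det _).mp hinv')
  have hSvDet : ((1 - h/2*(a*(co H 1 1 + 2*co H 2 1*(x 0 + h * w 0) + 2*co H 1 2*(x 1 + h * w 1)))) * (1 - h/2*(-(a*(co H 1 1 + 2*co H 2 1*(x 0 + h * w 0) + 2*co H 1 2*(x 1 + h * w 1))))) - (h/2*(a*(2*co H 0 2 + 2*co H 1 2*(x 0 + h * w 0) + 6*co H 0 3*(x 1 + h * w 1)))) * (h/2*(-(a*(2*co H 2 0 + 6*co H 3 0*(x 0 + h * w 0) + 2*co H 2 1*(x 1 + h * w 1)))))) * (h*((co H 1 0 + 2*co H 2 0*(x 0 + h * w 0) + co H 1 1*(x 1 + h * w 1) + 3*co H 3 0*(x 0 + h * w 0)^2 + 2*co H 2 1*(x 0 + h * w 0)*(x 1 + h * w 1) + co H 1 2*(x 1 + h * w 1)^2) * v 0 + (co H 0 1 + co H 1 1*(x 0 + h * w 0) + 2*co H 0 2*(x 1 + h * w 1) + co H 2 1*(x 0 + h * w 0)^2 + 2*co H 1 2*(x 0 + h * w 0)*(x 1 + h * w 1) + 3*co H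 0 3*(x 1 + h * w 1)^2) * v 1)
      + ((co H 1 0 + 2*co H 2 0*(x 0 + h * w 0) + co H 1 1*(x 1 + h * w 1) + 3*co H 3 0*(x 0 + h * w 0)^2 + 2*co H 2 1*(x 0 + h * w 0)*(x 1 + h * w 1) + co H 1 2*(x 1 + h * w 1)^2)*(h*w 0) + (co H 0 1 + co H 1 1*(x 0 + h * w 0) + 2*co H 0 2*(x 1 + h * w 1) + co H 2 1*(x 0 + h * w 0)^2 + 2*co H 1 2*(x 0 + h * w 0)*(x 1 + h * w 1) + 3*co H 0 3*(x 1 + h * w 1)^2)*(h*w 1))) = 0 := by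
    linear_combination (h*((co H 1 0 + 2*co H 2 0*(x 0 + h * w 0) + co H 1 1*(x 1 + h * w 1) + 3*co H 3 0*(x 0 + h * w 0)^2 + 2*co H 2 1*(x 0 + h * w 0)*(x 1 + h * w 1) + co H 1 2*(x 1 + h * w 1)^2) + h/2*((a*(co H 1 1 + 2*co H 2 1*(x 0 + h * w 0) + 2*co H 1 2*(x 1 + h * w 1)))*(co H 1 0 + 2*co H 2 0*(x 0 + h * w 0) + co H 1 1*(x 1 + h * w 1) + 3*co H 3 0*(x 0 + h * w 0)^2 + 2*co H 2 1*(x 0 + h * w 0)*(x 1 + h * w 1) + co H 1 2*(x 1 + h * w 1)^2) + (-(a*(2*co H 2 0 + 6*co H 3 0*(x 0 + h * w 0) + 2*co H 2 1*(x 1 + h * w 1))))*(co H 0 1 + co H 1 1*(x 0 + h * w 0) + 2*co H 0 2*(x 1 + h * w 1) + co H 2 1*(x 0 + h * w 0)^2 + 2*co H 1 2*(x 0 + h * w 0)*(x 1 + h * w 1) + 3*co H 0 3*(x 1 + h * w 1)^2)))) * hP0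
      + (h*((co H 0 1 + co H 1 1*(x 0 + h * w 0) + 2*co H 0 2*(x 1 + h * w 1) + co H 2 1*(x 0 + h * w 0)^2 + 2*co H 1 2*(x 0 + h * w 0)*(x 1 + h * w 1) + 3*co H 0 3*(x 1 + h * w 1)^2) + h/2*((a*(2*co H 0 2 + 2*co H 1 2*(x 0 + h * w 0) + 6*co H 0 3*(x 1 + h * w 1)))*(co H 1 0 + 2*co H 2 0*(x 0 + h * w 0) + co H 1 1*(x 1 + h * w 1) + 3*co H 3 0*(x 0 + h * w 0)^2 + 2*co H 2 1*(x 0 + h * w 0)*(x 1 + h * w 1) + co H 1 2*(x 1 + h * w 1)^2) + (-(a*(co H 1 1 + 2*co H 2 1*(x 0 + h * w 0) + 2*co H 1 2*(x 1 + h * w 1))))*(co H 0 1 + co H 1 1*(x 0 + h * w 0) + 2*co H 0 2*(x 1 + h * w 1) + co H 2 1*(x 0 + h * w 0)^2 + 2*co H 1 2*(x 0 + h * w 0)*(x 1 + h * w 1) + 3*co H 0 3*(x 1 + h * w 1)^2)))) * hP1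
      + ((co H 1 0 + 2*co H 2 0*(x 0 + h * w 0) + co H 1 1*(x 1 + h * w 1) + 3*co H 3 0*(x 0 + h * w 0)^2 + 2*co H 2 1*(x 0 + h * w 0)*(x 1 + h * w 1) + co H 1 2*(x 1 + h * w 1)^2) - h/2*((a*(co H 1 1 + 2*co H 2 1*(x 0 + h * w 0) + 2*co H 1 2*(x 1 + h * w 1)))*(co H 1 0 + 2*co H 2 0*(x 0 + h * w 0) + co H 1 1*(x 1 + h * w 1) + 3*co H 3 0*(x 0 + h * w 0)^2 + 2*co H 2 1*(x 0 + h * w 0)*(x 1 + h * w 1) + co H 1 2*(x 1 + h * w 1)^2) + (-(a*(2*co H 2 0 + 6*co H 3 0*(x 0 + h * w 0) + 2*co H 2 1*(x 1 + h * w 1))))*(co H 0 1 + co H 1 1*(x 0 + h * w 0) + 2*co H 0 2*(x 1 + h * w 1) + co H 2 1*(x 0 + h * w 0)^2 + 2*co H 1 2*(x 0 + h * w 0)*(x 1 + h * w 1) + 3*co H 0 3*(x 1 + h * w 1)^2))) * hR0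
      + ((co H 0 1 + co H 1 1*(x 0 + h * w 0) + 2*co H 0 2*(x 1 + h * w 1) + co H 2 1*(x 0 + h * w 0)^2 + 2*co H 1 2*(x 0 + h * w 0)*(x 1 + h * w 1) + 3*co H 0 3*(x 1 + h * w 1)^2) - h/2*((a*(2*co H 0 2 + 2*co H 1 2*(x 0 + h * w 0) + 6*co H 0 3*(x 1 + h * w 1)))*(co H 1 0 + 2*co H 2 0*(x 0 + h * w 0) + co H 1 1*(x 1 + h * w 1) + 3*co H 3 0*(x 0 + h * w 0)^2 + 2*co H 2 1*(x 0 + h * w 0)*(x 1 + h * w 1) + co H 1 2*(x 1 + h * w 1)^2) + (-(a*(co H 1 1 + 2*co H 2 1*(x 0 + h * w 0) + 2*co H 1 2*(x 1 + h * w 1))))*(co H 0 1 + co H 1 1*(x 0 + h * w 0) + 2*co H 0 2*(x 1 + h * w 1) + co H 2 1*(x 0 + h * w 0)^2 + 2*co H 1 2*(x 0 + h * w 0)*(x 1 + h * w 1) + 3*co H 0 3*(x 1 + h * w 1)^2))) * hR1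
  have hSv : h*((co H 1 0 + 2*co H 2 0*(x 0 + h * w 0) + co H 1 1*(x 1 + h * w 1) + 3*co H 3 0*(x 0 + h * w 0)^2 + 2*co H 2 1*(x 0 + h * w 0)*(x 1 + h * w 1) + co H 1 2*(x 1 + h * w 1)^2) * v 0 + (co H 0 1 + co H 1 1*(x 0 + h * w 0) + 2*co H 0 2*(x 1 + h * w 1) + co H 2 1*(x 0 + h * w 0)^2 + 2*co H 1 2*(x 0 + h * w 0)*(x 1 + h * w 1) + 3*co H 0 3*(x 1 + h * w 1)^2) * v 1) = -((co H 1 0 + 2*co H 2 0*(x 0 + h * w 0) + co H 1 1*(x 1 + h * w 1) + 3*co H 3 0*(x 0 + h * w 0)^2 + 2*co H 2 1*(x 0 + h * w 0)*(x 1 + h * w 1) + co H 1 2*(x 1 + h * w 1)^2)*(h*w 0) + (co H 0 1 + co H 1 1*(x 0 + h * w 0) + 2*co H 0 2*(x 1 + h * w 1) + co H 2 1*(x 0 + h * w 0)^2 + 2*co H 1 2*(x 0 + h * w 0)*(x 1 + h * w 1) + 3*co H 0 3*(x 1 + h * w 1)^2)*(h*w 1)) := by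
    have := (mul_eq_zero.mp hSvDet).resolve_left hdetne
    linear_combination this
  simp only [heval, hgrad, hg0, hg1, hy0, hy1]
  linear_combination (1/3) * hSv + (h*((1/3)*(co H 1 0 + 2*co H 2 0*(x 0 + h * w 0 / 2) + co H 1 1*(x 1 + h * w 1 / 2) + 3*co H 3 0*(x 0 + h * w 0 / 2)^2 + 2*co H 2 1*(x 0 + h * w 0 / 2)*(x 1 + h * w 1 / 2) + co H 1 2*(x 1 + h * w 1 / 2)^2) - (1/24)*(6*co H 3 0*(h * w 0)^2 + 4*co H 2 1*(h * w 0)*(h * w 1) + 2*co H 1 2*(h * w 1)^2))) * hE0 + (h*((1/3)*(co H 0 1 + co H 1 1*(x 0 + h * w 0 / 2) + 2*co H 0 2*(x 1 + h * w 1 / 2) + co H 2 1*(x 0 + h * w 0 / 2)^2 + 2*co H 1 2*(x 0 + h * w 0 / 2)*(x 1 + h * w 1 / 2) + 3*co H 0 3*(x 1 + h * w 1 / 2)^2) - (1/24)*(2*co H 2 1*(h * w 0)^2 + 4*co H 1 2*(h * w 0)*(h * w 1) + 6*co H 0 3*(h * w 1)^2))) * hE1
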